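/- arXiv:1501.00714 — 3 statements merged into one kernel-verified Lean document; each statement's English description precedes it below -/
import Mathlib

section
/- Let J ⊆ [n] and z ∈ Sₙ. Then z ∈ S_J if and only if z∘π(J)⁻¹ lies in the Bruhat interval [e, π(J)⁻¹] of Sₙ, where S_J = {π ∈ Sₙ : π(j) ≥ j for j ∈ J and π(j) ≤ j for j ∉ J}. -/
/-- The number of inversions of `w`, which equals the Coxeter length `ℓ(w)`. -/
def invCount {n : ℕ} (w : Equiv.Perm (Fin n)) : ℕ :=
  (Finset.univ.filter (fun p : Fin n × Fin n => p.1 < p.2 ∧ w p.2 < w p.1)).card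

/-- Cover relation of the strong Bruhat order: `v = t·u` for a transposition
`t`, with `ℓ(v) = ℓ(u) + 1`. -/
def bruhatCover {n : ℕ} (u v : Equiv.Perm (Fin n)) : Prop :=
  (∃ a b : Fin n, a ≠ b ∧ v = Equiv.swap a b * u) ∧ invCount v = invCount u + 1

/-- The strong Bruhat order: transitive (reflexive) closure of the cover
relation. -/
def bruhatLE {n : ℕ} (u v : Equiv.Perm (Fin n)) : Prop :=
  Relation.ReflTransGen bruhatCover u v

namespace BruhatAux
open Equiv Finset

variable {n : ℕ}

-- machinery
def Phi (p q : Fin n) (x : Fin n × Fin n) : Fin n × Fin n :=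
  (if p < x.2 ∧ x.2 < q then Equiv.swap p q x.1 else x.1,
   if p < x.1 ∧ x.1 < q then Equiv.swap p q x.2 else x.2)

lemma swap_interior_iff (p q y : Fin n) :
    (p < Equiv.swap p q y ∧ Equiv.swap p q y < q) ↔ (p < y ∧ y < q) := by
  rcases eq_or_ne y p with rfl | hyp
  · constructor <;> (rintro ⟨h1, h2⟩; simp_all [Equiv.swap_apply_left]) <;>
      exact absurd (h1.trans h2) (lt_irrefl _)
  rcases eq_or_ne y q with rfl | hyq
  · constructor <;> (rintro ⟨h1, h2⟩; simp_all [Equiv.swap_apply_right]) <;>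
      exact absurd (h1.trans h2) (lt_irrefl _)
  · rw [Equiv.swap_apply_of_ne_of_ne hyp hyq]

lemma Phi_invol (p q : Fin n) (x : Fin n × Fin n) : Phi p q (Phi p q x) = x := by
  obtain ⟨i, j⟩ := x
  simp only [Phi]
  by_cases hi : p < i ∧ i < q <;> by_cases hj : p < j ∧ j < q <;>
    simp [hi, hj, swap_interior_iff, Equiv.swap_apply_self]


def Svp (u : Equiv.Perm (Fin n)) (p q : Fin n) : Finset (Fin n × Fin n) :=
  univ.filter fun x : Fin n × Fin n =>
    Equiv.swap p q x.1 < Equiv.swap p q x.2 ∧ u x.2 < u x.1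

lemma invCount_mul_swap_card (u : Equiv.Perm (Fin n)) (p q : Fin n) :
    invCount (u * Equiv.swap p q) = (Svp u p q).card := by
  unfold invCount Svp
  apply Finset.card_nbij' (fun x : Fin n × Fin n => (Equiv.swap p q x.1, Equiv.swap p q x.2))
    (fun x : Fin n × Fin n => (Equiv.swap p q x.1, Equiv.swap p q x.2)) <;>
    intro x hx <;>
    simp only [Finset.coe_filter, Finset.mem_univ, true_and, Set.mem_ofPred_eq] at hx ⊢ <;>
    simp_all [Equiv.Perm.mul_apply, Equiv.swap_apply_self]

lemma swap_cases (p q y : Fin n) :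
    (y = p ∧ Equiv.swap p q y = q) ∨ (y = q ∧ Equiv.swap p q y = p) ∨
    (y ≠ p ∧ y ≠ q ∧ Equiv.swap p q y = y) := by
  rcases eq_or_ne y p with rfl | h1
  · exact Or.inl ⟨rfl, Equiv.swap_apply_left _ _⟩
  rcases eq_or_ne y q with rfl | h2
  · exact Or.inr (Or.inl ⟨rfl, Equiv.swap_apply_right _ _⟩)
  · exact Or.inr (Or.inr ⟨h1, h2, Equiv.swap_apply_of_ne_of_ne h1 h2⟩)

lemma CA1 (u : Equiv.Perm (Fin n)) (p q : Fin n) (hpq : p < q) (hu : u p < u q)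
    (x : Fin n × Fin n) (h1 : x.1 < x.2) (h2 : u x.2 < u x.1) :
    Phi p q x ∈ Svp u p q := by
  obtain ⟨i, j⟩ := x
  simp only at h1 h2
  simp only [Svp, Phi, mem_filter, mem_univ, true_and]
  rcases swap_cases p q i with ⟨hi, hi'⟩ | ⟨hi, hi'⟩ | ⟨hi1, hi2, hi'⟩ <;>
    rcases swap_cases p q j with ⟨hj, hj'⟩ | ⟨hj, hj'⟩ | ⟨hj1, hj2, hj'⟩ <;>
    by_cases hjint : p < j ∧ j < q <;> by_cases hiint : p < i ∧ i < q <;>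
    subst_vars <;>
    simp only [hjint, hiint, if_true, if_false, ite_true, ite_false, and_self, true_and,
      and_true, Equiv.swap_apply_left, Equiv.swap_apply_right, hi', hj',
      eq_self_iff_true, not_true, not_false_iff] <;>
    simp only [Fin.lt_def, not_and, not_lt] at h1 h2 hu hjint hiint hpq ⊢ <;>
    omega

lemma CA2 (u : Equiv.Perm (Fin n)) (p q : Fin n) (hpq : p < q) (hu : u p < u q)
    (hmid : ∀ r : Fin n, p < r → r < q → u r < u p ∨ u q < u r)
    (x : Fin n × Fin n) (hx : x ∈ Svp u p q) (hne : x.1 ≠ q ∨ x.2 ≠ p) :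
    (Phi p q x).1 < (Phi p q x).2 ∧ u (Phi p q x).2 < u (Phi p q x).1 := by
  obtain ⟨i, j⟩ := x
  have hmi := hmid i
  have hmj := hmid j
  simp only [Svp, mem_filter, mem_univ, true_and] at hx
  obtain ⟨hx1, hx2⟩ := hx
  simp only at hne
  simp only [Phi]
  rcases swap_cases p q i with ⟨hi, hi'⟩ | ⟨hi, hi'⟩ | ⟨hi1, hi2, hi'⟩ <;>
    rcases swap_cases p q j with ⟨hj, hj'⟩ | ⟨hj, hj'⟩ | ⟨hj1, hj2, hj'⟩ <;>
    by_cases hjint : p < j ∧ j < q <;> by_cases hiint : p < i ∧ i < q <;>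
    subst_vars <;>
    simp only [hi', hj'] at hx1 <;>
    simp only [hjint, hiint, if_true, if_false, ite_true, ite_false, and_self, true_and,
      and_true, Equiv.swap_apply_left, Equiv.swap_apply_right, hi', hj',
      eq_self_iff_true, not_true, not_false_iff, ne_eq] <;>
    simp only [ne_eq, Fin.ext_iff, Fin.lt_def, not_and, not_lt, not_true, or_self,
      eq_self_iff_true] at hx1 hx2 hu hjint hiint hpq hne hmi hmj ⊢ <;>
    omega

def Su (u : Equiv.Perm (Fin n)) : Finset (Fin n × Fin n) :=
  Finset.univ.filter (fun p : Fin n × Fin n => p.1 < p.2 ∧ u p.2 < u p.1)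

lemma invCount_eq_Su (u : Equiv.Perm (Fin n)) : invCount u = (Su u).card := rfl

lemma Phi_inj (p q : Fin n) : Function.Injective (Phi p q) :=
  Function.Involutive.injective (Phi_invol p q)

lemma qp_mem_Svp (u : Equiv.Perm (Fin n)) {p q : Fin n} (hpq : p < q) (hu : u p < u q) :
    (q, p) ∈ Svp u p q := by
  simp [Svp, Equiv.swap_apply_left, Equiv.swap_apply_right, hpq, hu]

lemma qp_not_mem_image (u : Equiv.Perm (Fin n)) {p q : Fin n} (hpq : p < q) :
    (q, p) ∉ (Su u).image (Phi p q) := by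
  intro h
  obtain ⟨x, hx, hxe⟩ := Finset.mem_image.mp h
  have : x = Phi p q (q, p) := by rw [← hxe, Phi_invol]
  have hqp : Phi p q (q, p) = (q, p) := by
    simp [Phi, lt_irrefl, hpq, not_lt.mpr (le_of_lt hpq)]
  rw [hqp] at this
  subst this
  simp only [Su, mem_filter] at hx
  exact absurd (hx.2.1) (not_lt.2 (le_of_lt hpq))

lemma image_subset_Svp (u : Equiv.Perm (Fin n)) {p q : Fin n} (hpq : p < q) (hu : u p < u q) :
    (Su u).image (Phi p q) ⊆ Svp u p q := by
  intro y hy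
  obtain ⟨x, hx, rfl⟩ := Finset.mem_image.mp hy
  simp only [Su, mem_filter] at hx
  exact CA1 u p q hpq hu x hx.2.1 hx.2.2

lemma invCount_mul_swap_lt (u : Equiv.Perm (Fin n)) {p q : Fin n} (hpq : p < q)
    (hu : u p < u q) : invCount u < invCount (u * Equiv.swap p q) := by
  rw [invCount_mul_swap_card, invCount_eq_Su]
  calc (Su u).card = ((Su u).image (Phi p q)).card :=
        (Finset.card_image_of_injective _ (Phi_inj p q)).symm
    _ < (Svp u p q).card := by
        apply Finset.card_lt_card
        exact ⟨image_subset_Svp u hpq hu,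
          fun hsub => qp_not_mem_image u hpq (hsub (qp_mem_Svp u hpq hu))⟩

lemma invCount_mul_swap_eq (u : Equiv.Perm (Fin n)) {p q : Fin n} (hpq : p < q)
    (hu : u p < u q) (hmid : ∀ r : Fin n, p < r → r < q → u r < u p ∨ u q < u r) :
    invCount (u * Equiv.swap p q) = invCount u + 1 := by
  rw [invCount_mul_swap_card, invCount_eq_Su]
  have hset : Svp u p q = insert (q, p) ((Su u).image (Phi p q)) := by
    ext y
    simp only [Finset.mem_insert]
    constructor
    · intro hy
      by_cases hy2 : y = (q, p)
      · exact Or.inl hy2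
      · right
        have hne : y.1 ≠ q ∨ y.2 ≠ p := by
          by_contra hc
          push_neg at hc
          exact hy2 (Prod.ext hc.1 hc.2)
        have hmem := CA2 u p q hpq hu hmid y hy hne
        refine Finset.mem_image.mpr ⟨Phi p q y, ?_, Phi_invol p q y⟩
        simp only [Su, mem_filter, mem_univ, true_and]
        exact hmem
    · rintro (rfl | hy)
      · exact qp_mem_Svp u hpq hu
      · exact image_subset_Svp u hpq hu hy
  rw [hset, Finset.card_insert_of_notMem (qp_not_mem_image u hpq),
    Finset.card_image_of_injective _ (Phi_inj p q)]

lemma bruhatCover_mul_swap (u : Equiv.Perm (Fin n)) {p q : Fin n} (hpq : p < q)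
    (hu : u p < u q) (hmid : ∀ r : Fin n, p < r → r < q → u r < u p ∨ u q < u r) :
    bruhatCover u (u * Equiv.swap p q) := by
  constructor
  · refine ⟨u p, u q, ne_of_lt hu, ?_⟩
    rw [Equiv.mul_swap_eq_swap_mul]
  · exact invCount_mul_swap_eq u hpq hu hmid

lemma bruhatCover_orient {u v : Equiv.Perm (Fin n)} (h : bruhatCover u v) :
    ∃ p q : Fin n, p < q ∧ u p < u q ∧ v = u * Equiv.swap p q ∧
      invCount v = invCount u + 1 := by
  obtain ⟨⟨a, b, hab, rfl⟩, hlen⟩ := h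
  have hform : Equiv.swap a b * u = u * Equiv.swap (u.symm a) (u.symm b) := by
    rw [Equiv.mul_swap_eq_swap_mul]
    simp
  set p0 := u.symm a
  set q0 := u.symm b
  have hne : p0 ≠ q0 := fun h => hab (by simpa [p0, q0] using congrArg u h)
  have hup : u p0 = a := u.apply_symm_apply a
  have huq : u q0 = b := u.apply_symm_apply b
  rcases lt_trichotomy p0 q0 with hlt | heq | hgt
  · -- p0 < q0 : need u p0 < u q0
    rcases lt_trichotomy (u p0) (u q0) with hv | hv | hv
    · exact ⟨p0, q0, hlt, hv, hform, hlen⟩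
    · exact absurd (u.injective hv) hne
    · -- descending swap: contradiction via invCount_mul_swap_lt on v
      exfalso
      set v := Equiv.swap a b * u with hv'
      have hvp : v p0 = b := by rw [hv']; simp [Equiv.Perm.mul_apply, hup]
      have hvq : v q0 = a := by rw [hv']; simp [Equiv.Perm.mul_apply, huq]
      have hvv : v p0 < v q0 := by rw [hvp, hvq]; rw [hup, huq] at hv; exact hv
      have hlt2 := invCount_mul_swap_lt v hlt hvv
      have : v * Equiv.swap p0 q0 = u := by
        rw [hform, mul_assoc]
        simp
      rw [this] at hlt2
      omega
  · exact absurd heq hne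
  · -- q0 < p0
    rcases lt_trichotomy (u q0) (u p0) with hv | hv | hv
    · refine ⟨q0, p0, hgt, hv, ?_, hlen⟩
      rw [hform, Equiv.swap_comm]
    · exact absurd (u.injective hv) (Ne.symm hne)
    · exfalso
      set v := Equiv.swap a b * u with hv'
      have hvp : v p0 = b := by rw [hv']; simp [Equiv.Perm.mul_apply, hup]
      have hvq : v q0 = a := by rw [hv']; simp [Equiv.Perm.mul_apply, huq]
      have hvv : v q0 < v p0 := by rw [hvp, hvq]; rw [hup, huq] at hv; exact hv
      have hlt2 := invCount_mul_swap_lt v hgt hvv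
      have : v * Equiv.swap q0 p0 = u := by
        rw [hform, Equiv.swap_comm p0 q0, mul_assoc]
        simp
      rw [this] at hlt2
      omega

/-- head count: positions with index < i and value ≥ t -/
def hcnt (w : Equiv.Perm (Fin n)) (i t : ℕ) : ℕ :=
  (univ.filter fun r : Fin n => (r : ℕ) < i ∧ t ≤ (w r : ℕ)).card

def tcnt (w : Equiv.Perm (Fin n)) (i t : ℕ) : ℕ :=
  (univ.filter fun r : Fin n => i ≤ (r : ℕ) ∧ t ≤ (w r : ℕ)).card

lemma card_filter_comp (u : Equiv.Perm (Fin n)) (P : Fin n → Prop) [DecidablePred P] :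
    (univ.filter fun r => P (u r)).card = (univ.filter P).card := by
  apply Finset.card_nbij' (fun r => u r) (fun v => u.symm v) <;> simp [Set.MapsTo, Set.LeftInvOn, Set.RightInvOn]

lemma hcnt_add_tcnt (w : Equiv.Perm (Fin n)) (i t : ℕ) :
    hcnt w i t + tcnt w i t = (univ.filter fun v : Fin n => t ≤ (v : ℕ)).card := by
  rw [← card_filter_comp w (fun v : Fin n => t ≤ (v : ℕ))]
  unfold hcnt tcnt
  rw [← Finset.card_filter_add_card_filter_not (p := fun r : Fin n => (r : ℕ) < i)
    (s := univ.filter fun r : Fin n => t ≤ (w r : ℕ))]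
  · rw [Finset.filter_filter, Finset.filter_filter]
    congr 1
    · apply Finset.card_nbij id <;> intro a <;> simp +contextual [and_comm]
    · apply Finset.card_nbij id <;> intro a <;> simp +contextual [and_comm, not_lt]

lemma hcnt_mono_cover {u v : Equiv.Perm (Fin n)} (h : bruhatCover u v) (i t : ℕ) :
    hcnt u i t ≤ hcnt v i t := by
  obtain ⟨p, q, hpq, hu, rfl, -⟩ := bruhatCover_orient h
  unfold hcnt
  apply Finset.card_le_card_of_injOn
    (fun r => if r = q ∧ (u p : ℕ) < t then p else r)
  · intro r hr
    simp only [mem_coe, mem_filter, mem_univ, true_and] at hr ⊢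
    by_cases hrq : r = q ∧ (u p : ℕ) < t
    · simp only [if_pos hrq]
      refine ⟨?_, ?_⟩
      · have h1 := hr.1
        have h2 : (p : ℕ) < (q : ℕ) := hpq
        have h3 : (r : ℕ) = (q : ℕ) := by rw [hrq.1]
        omega
      · have he : (u * Equiv.swap p q) p = u q := by simp [Equiv.Perm.mul_apply]
        rw [he, ← hrq.1]
        exact hr.2
    · simp only [if_neg hrq]
      rcases eq_or_ne r q with hq | hrq2
      · rw [hq]
        have h5 : (u * Equiv.swap p q) q = u p := by simp [Equiv.Perm.mul_apply]
        rw [h5]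
        refine ⟨by rw [← hq]; exact hr.1, ?_⟩
        push_neg at hrq
        exact hrq hq
      · rcases eq_or_ne r p with hp | hrp2
        · rw [hp]
          have h5 : (u * Equiv.swap p q) p = u q := by simp [Equiv.Perm.mul_apply]
          rw [h5]
          refine ⟨by rw [← hp]; exact hr.1, le_trans ?_ (le_of_lt (Fin.lt_def.mp hu))⟩
          rw [← hp]
          exact hr.2
        · have h5 : (u * Equiv.swap p q) r = u r := by
            simp [Equiv.Perm.mul_apply, Equiv.swap_apply_of_ne_of_ne hrp2 hrq2]
          rw [h5]
          exact hr
  · intro r1 h1 r2 h2 he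
    simp only [mem_coe, mem_filter, mem_univ, true_and] at h1 h2
    simp only at he
    by_cases e1 : r1 = q ∧ (u p : ℕ) < t <;> by_cases e2 : r2 = q ∧ (u p : ℕ) < t
    · rw [e1.1, e2.1]
    · rw [if_pos e1, if_neg e2] at he
      exfalso
      have h4 := e1.2
      rw [he] at h4
      omega
    · rw [if_neg e1, if_pos e2] at he
      exfalso
      have h4 := e2.2
      rw [← he] at h4
      omega
    · rwa [if_neg e1, if_neg e2] at he

lemma hcnt_mono {u v : Equiv.Perm (Fin n)} (h : bruhatLE u v) (i t : ℕ) :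
    hcnt u i t ≤ hcnt v i t := by
  induction h with
  | refl => exact le_refl _
  | tail _ hc ih => exact le_trans ih (hcnt_mono_cover hc i t)

lemma tcnt_anti {u v : Equiv.Perm (Fin n)} (h : bruhatLE u v) (i t : ℕ) :
    tcnt v i t ≤ tcnt u i t := by
  have h1 := hcnt_mono h i t
  have h2 := hcnt_add_tcnt u i t
  have h3 := hcnt_add_tcnt v i t
  omega

/-- the interval pointwise condition -/
def Cond (w σ : Equiv.Perm (Fin n)) (m : ℕ) : Prop :=
  ∀ p : Fin n, ((p : ℕ) < m → w p ≤ σ p) ∧ (m ≤ (p : ℕ) → σ p ≤ w p)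

lemma dirA {w σ : Equiv.Perm (Fin n)} {m : ℕ}
    (hb1 : ∀ p q : Fin n, p < q → (q : ℕ) < m → σ p < σ q)
    (hb2 : ∀ p q : Fin n, p < q → m ≤ (p : ℕ) → σ p < σ q)
    (h : bruhatLE w σ) : Cond w σ m := by
  intro p
  constructor
  · intro hpm
    have hmono := hcnt_mono h ((p : ℕ) + 1) ((σ p : ℕ) + 1)
    have hzero : hcnt σ ((p : ℕ) + 1) ((σ p : ℕ) + 1) = 0 := by
      unfold hcnt
      rw [Finset.card_eq_zero, Finset.filter_eq_empty_iff]
      intro r _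
      rintro ⟨hr1, hr2⟩
      rcases lt_trichotomy r p with hrp | rfl | hrp
      · exact absurd (Fin.lt_def.mp (hb1 r p hrp hpm)) (by omega)
      · omega
      · exact absurd (Fin.lt_def.mp hrp) (by omega)
    rw [hzero, Nat.le_zero] at hmono
    unfold hcnt at hmono
    rw [Finset.card_eq_zero, Finset.filter_eq_empty_iff] at hmono
    have := hmono (Finset.mem_univ p)
    rw [Fin.le_def]
    by_contra hc
    exact this ⟨by omega, by omega⟩
  · intro hmp
    have hmono := tcnt_anti h (p : ℕ) (σ p : ℕ)
    have hfull : tcnt σ (p : ℕ) (σ p : ℕ) =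
        (univ.filter fun r : Fin n => (p : ℕ) ≤ (r : ℕ)).card := by
      unfold tcnt
      congr 1
      apply Finset.filter_congr
      intro r _
      constructor
      · rintro ⟨h1, -⟩; exact h1
      · intro h1
        refine ⟨h1, ?_⟩
        rcases lt_trichotomy p r with hrp | rfl | hrp
        · exact le_of_lt (Fin.lt_def.mp (hb2 p r hrp hmp))
        · exact le_refl _
        · exact absurd (Fin.lt_def.mp hrp) (by omega)
    rw [hfull] at hmono
    have hsub : (univ.filter fun r : Fin n => (p : ℕ) ≤ (r : ℕ) ∧ (σ p : ℕ) ≤ (w r : ℕ))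
        ⊆ (univ.filter fun r : Fin n => (p : ℕ) ≤ (r : ℕ)) := by
      intro r hr
      simp only [mem_filter, mem_univ, true_and] at hr ⊢
      exact hr.1
    have heq := Finset.eq_of_subset_of_card_le hsub hmono
    have hp : p ∈ (univ.filter fun r : Fin n => (p : ℕ) ≤ (r : ℕ)) := by
      simp
    rw [← heq] at hp
    simp only [mem_filter, mem_univ, true_and] at hp
    rw [Fin.le_def]
    exact hp.2

lemma card_filter_Ico (lo hi : ℕ) (hhi : hi ≤ n) :
    (univ.filter fun r : Fin n => lo ≤ (r : ℕ) ∧ (r : ℕ) < hi).card = hi - lo := by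
  rw [← Nat.card_Ico]
  apply Finset.card_nbij (fun r : Fin n => (r : ℕ))
  · intro r hr; simp_all [Finset.mem_Ico]
  · exact fun a _ b _ h => Fin.val_injective h
  · intro x hx
    simp only [Finset.coe_Ico, Set.mem_Ico] at hx
    exact ⟨⟨x, lt_of_lt_of_le hx.2 hhi⟩, by simp [hx.1, hx.2], rfl⟩

lemma card_filter_split (p q : Fin n) (hpq : p < q) (P : Fin n → Prop) [DecidablePred P] :
    (univ.filter P).card =
      (univ.filter fun r => r < p ∧ P r).card + (univ.filter fun r => r = p ∧ P r).card +
      (univ.filter fun r => p < r ∧ r < q ∧ P r).card +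
      (univ.filter fun r => r = q ∧ P r).card +
      (univ.filter fun r => q < r ∧ P r).card := by
  have hpq' : (p : ℕ) < (q : ℕ) := hpq
  rw [Finset.card_filter, Finset.card_filter, Finset.card_filter, Finset.card_filter,
    Finset.card_filter, Finset.card_filter, ← Finset.sum_add_distrib, ← Finset.sum_add_distrib,
    ← Finset.sum_add_distrib, ← Finset.sum_add_distrib]
  apply Finset.sum_congr rfl
  intro r _
  by_cases hP : P r <;>
    simp only [hP, and_true, and_false, if_false, Fin.lt_def, Fin.ext_iff] <;>
    split_ifs <;> omega

lemma card_point {p : Fin n} (P : Fin n → Prop) [DecidablePred P] :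
    (univ.filter fun r => r = p ∧ P r).card = if P p then 1 else 0 := by
  by_cases h : P p
  · rw [if_pos h]
    have : (univ.filter fun r => r = p ∧ P r) = {p} := by
      ext r
      simp only [mem_filter, mem_univ, true_and, mem_singleton]
      exact ⟨fun hr => hr.1, fun hr => ⟨hr, hr ▸ h⟩⟩
    rw [this, Finset.card_singleton]
  · rw [if_neg h]
    rw [Finset.card_eq_zero, Finset.filter_eq_empty_iff]
    rintro r - ⟨rfl, hP⟩
    exact h hP

lemma stepB {w σ : Equiv.Perm (Fin n)} {m : ℕ}
    (hb1 : ∀ p q : Fin n, p < q → (q : ℕ) < m → σ p < σ q)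
    (hb2 : ∀ p q : Fin n, p < q → m ≤ (p : ℕ) → σ p < σ q)
    (hcond : Cond w σ m) (hne : w ≠ σ) :
    ∃ w' : Equiv.Perm (Fin n), bruhatCover w w' ∧ Cond w' σ m := by
  classical
  -- the set of disagreements
  have hD : (univ.filter fun r : Fin n => w r ≠ σ r).Nonempty := by
    by_contra hc
    rw [Finset.not_nonempty_iff_eq_empty, Finset.filter_eq_empty_iff] at hc
    exact hne (Equiv.ext fun r => not_ne_iff.mp (hc (mem_univ r)))
  set D := univ.filter fun r : Fin n => w r ≠ σ r with hDdef
  set p := D.min' hD with hpdef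
  have hp_mem : w p ≠ σ p := by
    have h0 : p ∈ D := D.min'_mem hD
    have h1 : p ∈ univ.filter fun r : Fin n => w r ≠ σ r := h0
    exact (Finset.mem_filter.mp h1).2
  have hp_min : ∀ r : Fin n, r < p → w r = σ r := by
    intro r hr
    by_contra hc
    have : r ∈ D := by rw [hDdef]; exact Finset.mem_filter.mpr ⟨mem_univ r, hc⟩
    exact absurd (D.min'_le r this) (not_le.mpr hr)
  -- p is in the first block
  have hpm : (p : ℕ) < m := by
    by_contra hge
    push_neg at hge
    -- all positions < m agree, and on positions ≥ m the sums agree with pointwise ≤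
    have hagree : ∀ r : Fin n, (r : ℕ) < m → w r = σ r := by
      intro r hr
      apply hp_min
      rw [Fin.lt_def]
      omega
    have htot : ∑ r : Fin n, ((w r : ℕ)) = ∑ r : Fin n, ((σ r : ℕ)) := by
      rw [Equiv.sum_comp w (fun v : Fin n => (v : ℕ)),
        Equiv.sum_comp σ (fun v : Fin n => (v : ℕ))]
    have hsplitw := Finset.sum_filter_add_sum_filter_not univ
      (fun r : Fin n => (r : ℕ) < m) (fun r : Fin n => (w r : ℕ))
    have hsplits := Finset.sum_filter_add_sum_filter_not univ
      (fun r : Fin n => (r : ℕ) < m) (fun r : Fin n => (σ r : ℕ))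
    have hlow : ∑ r ∈ univ.filter (fun r : Fin n => (r : ℕ) < m), ((w r : ℕ)) =
        ∑ r ∈ univ.filter (fun r : Fin n => (r : ℕ) < m), ((σ r : ℕ)) := by
      apply Finset.sum_congr rfl
      intro r hr
      rw [hagree r (Finset.mem_filter.mp hr).2]
    have hhigh : ∑ r ∈ univ.filter (fun r : Fin n => ¬ (r : ℕ) < m), ((w r : ℕ)) =
        ∑ r ∈ univ.filter (fun r : Fin n => ¬ (r : ℕ) < m), ((σ r : ℕ)) := by
      omega
    have hle : ∀ r ∈ univ.filter (fun r : Fin n => ¬ (r : ℕ) < m),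
        ((σ r : ℕ)) ≤ ((w r : ℕ)) := by
      intro r hr
      have := (hcond r).2 (by
        have := (Finset.mem_filter.mp hr).2
        omega)
      exact this
    have := (Finset.sum_eq_sum_iff_of_le hle).mp hhigh.symm
    have hp2 : ((σ p : ℕ)) = ((w p : ℕ)) := by
      apply this
      rw [Finset.mem_filter]
      exact ⟨mem_univ p, by omega⟩
    exact hp_mem (Fin.val_injective hp2.symm)
  -- w p < σ p
  have ha : w p < σ p := lt_of_le_of_ne ((hcond p).1 hpm) hp_mem
  -- the candidate set
  have hQne : (univ.filter fun r : Fin n => p < r ∧ w p < w r ∧ w r ≤ σ p).Nonempty := by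
    refine ⟨w.symm (σ p), ?_⟩
    have hval : w (w.symm (σ p)) = σ p := w.apply_symm_apply _
    rw [Finset.mem_filter]
    refine ⟨mem_univ _, ?_, by rw [hval]; exact ha, by rw [hval]⟩
    rcases lt_trichotomy (w.symm (σ p)) p with hlt | heq | hgt
    · exfalso
      have h1 := hp_min _ hlt
      exact absurd (σ.injective (h1.symm.trans hval)) (ne_of_lt hlt)
    · exfalso
      rw [heq] at hval
      exact hp_mem hval
    · exact hgt
  set Q := univ.filter fun r : Fin n => p < r ∧ w p < w r ∧ w r ≤ σ p with hQdef
  set q := Q.min' hQne with hqdef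
  have hq_mem : p < q ∧ w p < w q ∧ w q ≤ σ p := by
    have h0 : q ∈ Q := Q.min'_mem hQne
    have h1 : q ∈ univ.filter fun r : Fin n => p < r ∧ w p < w r ∧ w r ≤ σ p := h0
    exact (Finset.mem_filter.mp h1).2
  have hq_min : ∀ r : Fin n, p < r → r < q → ¬(w p < w r ∧ w r ≤ σ p) := by
    intro r hpr hrq hc
    have : r ∈ Q := by rw [hQdef]; exact Finset.mem_filter.mpr ⟨mem_univ r, hpr, hc⟩
    exact absurd (Q.min'_le r this) (not_le.mpr hrq)
  have hmid : ∀ r : Fin n, p < r → r < q → w r < w p ∨ w q < w r := by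
    intro r hpr hrq
    have hnot := hq_min r hpr hrq
    rcases lt_trichotomy (w r) (w p) with h | h | h
    · exact Or.inl h
    · exact absurd (w.injective h) (ne_of_gt hpr)
    · right
      have : ¬ w r ≤ σ p := fun hc => hnot ⟨h, hc⟩
      push_neg at this
      exact lt_of_le_of_lt hq_mem.2.2 this
  refine ⟨w * Equiv.swap p q, bruhatCover_mul_swap w hq_mem.1 hq_mem.2.1 hmid, ?_⟩
  -- now prove the condition for w * swap p q
  have happ : ∀ r : Fin n, r ≠ p → r ≠ q → (w * Equiv.swap p q) r = w r := by
    intro r h1 h2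
    simp [Equiv.Perm.mul_apply, Equiv.swap_apply_of_ne_of_ne h1 h2]
  have happ_p : (w * Equiv.swap p q) p = w q := by simp [Equiv.Perm.mul_apply]
  have happ_q : (w * Equiv.swap p q) q = w p := by simp [Equiv.Perm.mul_apply]
  intro r
  rcases eq_or_ne r p with hrp | hrp
  · rw [hrp, happ_p]
    constructor
    · intro _
      exact hq_mem.2.2
    · intro hmr
      exact absurd hmr (by omega)
  · rcases eq_or_ne r q with hrq | hrq
    · rw [hrq, happ_q]
      constructor
      · intro hqm
        exact le_of_lt (lt_of_lt_of_le hq_mem.2.1 ((hcond q).1 hqm))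
      · intro hqm
        -- the hard case
        by_contra hcc
        push_neg at hcc
        -- hcc : w p < σ q
        have hq' : (p : ℕ) < (q : ℕ) := hq_mem.1
        have hqn : (q : ℕ) < n := q.isLt
        have hσqw : (σ q : ℕ) ≤ (w q : ℕ) := (hcond q).2 hqm
        have hσqp : (σ q : ℕ) ≤ (σ p : ℕ) := le_trans hσqw hq_mem.2.2
        have haq : (w p : ℕ) < (σ q : ℕ) := hcc
        have hwqa : (w p : ℕ) < (w q : ℕ) := hq_mem.2.1
        have hwqsp : (w q : ℕ) ≤ (σ p : ℕ) := hq_mem.2.2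
        have hasp : (w p : ℕ) < (σ p : ℕ) := ha
        -- value-count identities
        have hI : (univ.filter fun r : Fin n => (w r : ℕ) < (σ q : ℕ)).card
            = (univ.filter fun r : Fin n => (σ r : ℕ) < (σ q : ℕ)).card := by
          rw [card_filter_comp w (fun v : Fin n => (v : ℕ) < (σ q : ℕ)),
            card_filter_comp σ (fun v : Fin n => (v : ℕ) < (σ q : ℕ))]
        have hII : (univ.filter fun r : Fin n => (σ p : ℕ) < (w r : ℕ)).card
            = (univ.filter fun r : Fin n => (σ p : ℕ) < (σ r : ℕ)).card := by
          rw [card_filter_comp w (fun v : Fin n => (σ p : ℕ) < (v : ℕ)),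
            card_filter_comp σ (fun v : Fin n => (σ p : ℕ) < (v : ℕ))]
        have sWI := card_filter_split p q hq_mem.1 (fun r : Fin n => (w r : ℕ) < (σ q : ℕ))
        have sSI := card_filter_split p q hq_mem.1 (fun r : Fin n => (σ r : ℕ) < (σ q : ℕ))
        have sWII := card_filter_split p q hq_mem.1 (fun r : Fin n => (σ p : ℕ) < (w r : ℕ))
        have sSII := card_filter_split p q hq_mem.1 (fun r : Fin n => (σ p : ℕ) < (σ r : ℕ))
        -- region computations, identity I, w side
        have e1 : (univ.filter fun r : Fin n => r < p ∧ (w r : ℕ) < (σ q : ℕ)).card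
            = (univ.filter fun r : Fin n => r < p ∧ (σ r : ℕ) < (σ q : ℕ)).card := by
          congr 1
          apply Finset.filter_congr
          intro r _
          exact and_congr_right fun hrp => by rw [hp_min r hrp]
        have e2 : (univ.filter fun r : Fin n => r = p ∧ (w r : ℕ) < (σ q : ℕ)).card = 1 := by
          rw [card_point (fun r : Fin n => (w r : ℕ) < (σ q : ℕ)), if_pos haq]
        have e3 : (univ.filter fun r : Fin n => r = p ∧ (σ r : ℕ) < (σ q : ℕ)).card = 0 := by
          rw [card_point (fun r : Fin n => (σ r : ℕ) < (σ q : ℕ)), if_neg (by omega)]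
        -- the strip
        have hstripeq : (univ.filter fun r : Fin n => p < r ∧ r < q)
            = (univ.filter fun r : Fin n => (p : ℕ) + 1 ≤ (r : ℕ) ∧ (r : ℕ) < (q : ℕ)) := by
          apply Finset.filter_congr
          intro r _
          rw [Fin.lt_def, Fin.lt_def]
          omega
        have hstrip : (univ.filter fun r : Fin n => p < r ∧ r < q).card
            = (q : ℕ) - (p : ℕ) - 1 := by
          rw [hstripeq, card_filter_Ico ((p : ℕ) + 1) (q : ℕ) (le_of_lt hqn)]
          omega
        have hsum3 := Finset.card_filter_add_card_filter_not
          (s := univ.filter fun r : Fin n => p < r ∧ r < q)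
          (p := fun r : Fin n => (w r : ℕ) ≤ (w p : ℕ))
        rw [Finset.filter_filter, Finset.filter_filter, hstrip] at hsum3
        have e4 : (univ.filter fun r : Fin n => p < r ∧ r < q ∧ (w r : ℕ) < (σ q : ℕ)).card
            = (univ.filter fun r : Fin n => (p < r ∧ r < q) ∧ (w r : ℕ) ≤ (w p : ℕ)).card := by
          congr 1
          apply Finset.filter_congr
          intro r _
          constructor
          · rintro ⟨hrp, hrq, h5⟩
            refine ⟨⟨hrp, hrq⟩, ?_⟩
            by_contra h6
            push_neg at h6
            exact (hq_min r hrp hrq) ⟨Fin.lt_def.mpr h6, Fin.le_def.mpr (by omega)⟩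
          · rintro ⟨⟨hrp, hrq⟩, h5⟩
            exact ⟨hrp, hrq, by omega⟩
        have e5 : (univ.filter fun r : Fin n => r = q ∧ (w r : ℕ) < (σ q : ℕ)).card = 0 := by
          rw [card_point (fun r : Fin n => (w r : ℕ) < (σ q : ℕ)), if_neg (by omega)]
        have e6 : (univ.filter fun r : Fin n => q < r ∧ (w r : ℕ) < (σ q : ℕ)).card = 0 := by
          rw [Finset.card_eq_zero, Finset.filter_eq_empty_iff]
          rintro r - ⟨hqr, h5⟩
          have h6 : (σ q : ℕ) < (σ r : ℕ) := hb2 q r hqr hqm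
          have h7 : m ≤ (r : ℕ) := by
            have := Fin.lt_def.mp hqr
            omega
          have h8 : (σ r : ℕ) ≤ (w r : ℕ) := (hcond r).2 h7
          omega
        -- identity I, σ side
        have e7 : (univ.filter fun r : Fin n => r = q ∧ (σ r : ℕ) < (σ q : ℕ)).card = 0 := by
          rw [card_point (fun r : Fin n => (σ r : ℕ) < (σ q : ℕ)), if_neg (by omega)]
        have e8 : (univ.filter fun r : Fin n => q < r ∧ (σ r : ℕ) < (σ q : ℕ)).card = 0 := by
          rw [Finset.card_eq_zero, Finset.filter_eq_empty_iff]
          rintro r - ⟨hqr, h5⟩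
          have h6 : (σ q : ℕ) < (σ r : ℕ) := hb2 q r hqr hqm
          omega
        have e9 : (univ.filter fun r : Fin n => p < r ∧ r < q ∧ (σ r : ℕ) < (σ q : ℕ)).card
            = (q : ℕ) - m := by
          rw [show (univ.filter fun r : Fin n => p < r ∧ r < q ∧ (σ r : ℕ) < (σ q : ℕ))
              = (univ.filter fun r : Fin n => m ≤ (r : ℕ) ∧ (r : ℕ) < (q : ℕ)) from ?_]
          · exact card_filter_Ico m (q : ℕ) (le_of_lt hqn)
          apply Finset.filter_congr
          intro r _
          constructor
          · rintro ⟨hrp, hrq, h5⟩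
            refine ⟨?_, Fin.lt_def.mp hrq⟩
            by_contra h6
            push_neg at h6
            have h7 : (σ p : ℕ) < (σ r : ℕ) := hb1 p r hrp h6
            omega
          · rintro ⟨h5, h6⟩
            refine ⟨Fin.lt_def.mpr (by omega), Fin.lt_def.mpr h6, ?_⟩
            exact hb2 r q (Fin.lt_def.mpr h6) h5
        -- identity II, w side
        have f1 : (univ.filter fun r : Fin n => r < p ∧ (σ p : ℕ) < (w r : ℕ)).card
            = (univ.filter fun r : Fin n => r < p ∧ (σ p : ℕ) < (σ r : ℕ)).card := by
          congr 1
          apply Finset.filter_congr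
          intro r _
          exact and_congr_right fun hrp => by rw [hp_min r hrp]
        have f2 : (univ.filter fun r : Fin n => r = p ∧ (σ p : ℕ) < (w r : ℕ)).card = 0 := by
          rw [card_point (fun r : Fin n => (σ p : ℕ) < (w r : ℕ)), if_neg (by omega)]
        have f3 : (univ.filter fun r : Fin n => p < r ∧ r < q ∧ (σ p : ℕ) < (w r : ℕ)).card
            = (univ.filter fun r : Fin n => (p < r ∧ r < q) ∧ ¬ (w r : ℕ) ≤ (w p : ℕ)).card := by
          congr 1
          apply Finset.filter_congr
          intro r _
          constructor
          · rintro ⟨hrp, hrq, h5⟩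
            exact ⟨⟨hrp, hrq⟩, by omega⟩
          · rintro ⟨⟨hrp, hrq⟩, h5⟩
            push_neg at h5
            refine ⟨hrp, hrq, ?_⟩
            have h6 := hq_min r hrp hrq
            have h7 : ¬ w r ≤ σ p := fun hc => h6 ⟨Fin.lt_def.mpr h5, hc⟩
            have := Fin.le_def.not.mp h7
            omega
        have f4 : (univ.filter fun r : Fin n => r = q ∧ (σ p : ℕ) < (w r : ℕ)).card = 0 := by
          rw [card_point (fun r : Fin n => (σ p : ℕ) < (w r : ℕ)), if_neg (by omega)]
        -- identity II, σ side
        have g2 : (univ.filter fun r : Fin n => r = p ∧ (σ p : ℕ) < (σ r : ℕ)).card = 0 := by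
          rw [card_point (fun r : Fin n => (σ p : ℕ) < (σ r : ℕ)), if_neg (by omega)]
        have g3 : (univ.filter fun r : Fin n => p < r ∧ r < q ∧ (σ p : ℕ) < (σ r : ℕ)).card
            = m - (p : ℕ) - 1 := by
          rw [show (univ.filter fun r : Fin n => p < r ∧ r < q ∧ (σ p : ℕ) < (σ r : ℕ))
              = (univ.filter fun r : Fin n => (p : ℕ) + 1 ≤ (r : ℕ) ∧ (r : ℕ) < m) from ?_]
          · rw [card_filter_Ico ((p : ℕ) + 1) m (by omega)]
            omega
          apply Finset.filter_congr
          intro r _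
          constructor
          · rintro ⟨hrp, hrq, h5⟩
            refine ⟨by have := Fin.lt_def.mp hrp; omega, ?_⟩
            by_contra h6
            push_neg at h6
            have h7 : (σ r : ℕ) < (σ q : ℕ) := hb2 r q hrq h6
            omega
          · rintro ⟨h5, h6⟩
            have hrp : p < r := Fin.lt_def.mpr (by omega)
            refine ⟨hrp, Fin.lt_def.mpr (by omega), hb1 p r hrp h6⟩
        have g4 : (univ.filter fun r : Fin n => r = q ∧ (σ p : ℕ) < (σ r : ℕ)).card = 0 := by
          rw [card_point (fun r : Fin n => (σ p : ℕ) < (σ r : ℕ)), if_neg (by omega)]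
        have hBB : (univ.filter fun r : Fin n => q < r ∧ (σ p : ℕ) < (σ r : ℕ)).card
            ≤ (univ.filter fun r : Fin n => q < r ∧ (σ p : ℕ) < (w r : ℕ)).card := by
          apply Finset.card_le_card
          intro r hr
          simp only [mem_filter, mem_univ, true_and] at hr ⊢
          refine ⟨hr.1, ?_⟩
          have h7 : m ≤ (r : ℕ) := by
            have := Fin.lt_def.mp hr.1
            omega
          have h8 : (σ r : ℕ) ≤ (w r : ℕ) := (hcond r).2 h7
          omega
        rw [e1, e2, e4, e5, e6] at sWI
        rw [e3, e7, e8, e9] at sSI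
        rw [f1, f2, f3, f4] at sWII
        rw [g2, g3, g4] at sSII
        omega
    · rw [happ r hrp hrq]
      exact hcond r

lemma invCount_lt_sq (hn : 0 < n) (w : Equiv.Perm (Fin n)) : invCount w < n * n := by
  unfold invCount
  have h1 : (univ.filter (fun p : Fin n × Fin n => p.1 < p.2 ∧ w p.2 < w p.1))
      ⊂ (univ : Finset (Fin n × Fin n)) := by
    refine ⟨Finset.filter_subset _ _, fun hsub => ?_⟩
    have h2 := hsub (Finset.mem_univ ((⟨0, hn⟩ : Fin n), (⟨0, hn⟩ : Fin n)))
    simp only [Finset.mem_filter] at h2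
    exact absurd h2.2.1 (lt_irrefl _)
  calc (univ.filter (fun p : Fin n × Fin n => p.1 < p.2 ∧ w p.2 < w p.1)).card
      < (univ : Finset (Fin n × Fin n)).card := Finset.card_lt_card h1
    _ = n * n := by rw [Finset.card_univ, Fintype.card_prod, Fintype.card_fin]

lemma dirB_aux {σ : Equiv.Perm (Fin n)} {m : ℕ}
    (hb1 : ∀ p q : Fin n, p < q → (q : ℕ) < m → σ p < σ q)
    (hb2 : ∀ p q : Fin n, p < q → m ≤ (p : ℕ) → σ p < σ q) :
    ∀ (fuel : ℕ) (w : Equiv.Perm (Fin n)),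
      n * n ≤ invCount w + fuel → Cond w σ m → bruhatLE w σ := by
  intro fuel
  induction fuel with
  | zero =>
    intro w hf hcond
    by_cases hw : w = σ
    · exact hw ▸ Relation.ReflTransGen.refl
    · exfalso
      rcases Nat.eq_zero_or_pos n with hn | hn
      · apply hw
        apply Equiv.ext
        intro x
        exact absurd x.isLt (by omega)
      · have := invCount_lt_sq hn w
        omega
  | succ fuel ih =>
    intro w hf hcond
    by_cases hw : w = σ
    · exact hw ▸ Relation.ReflTransGen.refl
    · obtain ⟨w', hcov, hcond'⟩ := stepB hb1 hb2 hcond hw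
      have h1 : invCount w' = invCount w + 1 := hcov.2
      exact Relation.ReflTransGen.head hcov (ih w' (by omega) hcond')

lemma dirB {w σ : Equiv.Perm (Fin n)} {m : ℕ}
    (hb1 : ∀ p q : Fin n, p < q → (q : ℕ) < m → σ p < σ q)
    (hb2 : ∀ p q : Fin n, p < q → m ≤ (p : ℕ) → σ p < σ q)
    (hcond : Cond w σ m) : bruhatLE w σ :=
  dirB_aux hb1 hb2 (n * n) w (by omega) hcond

lemma eq_one_of_invCount_eq_zero {w : Equiv.Perm (Fin n)} (h : invCount w = 0) : w = 1 := by
  unfold invCount at h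
  rw [Finset.card_eq_zero, Finset.filter_eq_empty_iff] at h
  have hsm : StrictMono w := by
    intro i j hij
    have h1 := h (Finset.mem_univ (i, j))
    simp only [not_and, not_lt] at h1
    have h2 := h1 hij
    exact lt_of_le_of_ne h2 (fun hc => absurd (w.injective hc) (ne_of_lt hij))
  have hr : Set.range w = Set.range (id : Fin n → Fin n) := by
    rw [Set.range_id]
    exact w.surjective.range_eq
  have := (hsm.range_inj strictMono_id).mp hr
  exact Equiv.ext fun x => congrFun this x

lemma exists_cover_below {w : Equiv.Perm (Fin n)} (hw : w ≠ 1) :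
    ∃ u : Equiv.Perm (Fin n), bruhatCover u w := by
  have hne : (univ.filter (fun x : Fin n × Fin n => x.1 < x.2 ∧ w x.2 < w x.1)).Nonempty := by
    rw [Finset.filter_nonempty_iff]
    by_contra hc
    push_neg at hc
    apply hw
    apply eq_one_of_invCount_eq_zero
    unfold invCount
    rw [Finset.card_eq_zero, Finset.filter_eq_empty_iff]
    intro x hx
    rintro ⟨h1, h2⟩
    exact absurd (hc x hx h1) (not_le.mpr h2)
  obtain ⟨x, hx, hmin⟩ := Finset.exists_min_image _ (fun x : Fin n × Fin n =>
    (x.2 : ℕ) - (x.1 : ℕ)) hne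
  simp only [Finset.mem_filter, Finset.mem_univ, true_and] at hx
  obtain ⟨hpq, hwpq⟩ := hx
  set p := x.1
  set q := x.2
  set u := w * Equiv.swap p q with hudef
  have hup : u p = w q := by simp [hudef, Equiv.Perm.mul_apply]
  have huq : u q = w p := by simp [hudef, Equiv.Perm.mul_apply]
  have huval : u p < u q := by rw [hup, huq]; exact hwpq
  have hmid : ∀ r : Fin n, p < r → r < q → u r < u p ∨ u q < u r := by
    intro r hpr hrq
    have hur : u r = w r := by
      simp [hudef, Equiv.Perm.mul_apply,
        Equiv.swap_apply_of_ne_of_ne (ne_of_gt hpr) (ne_of_lt hrq)]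
    rw [hur, hup, huq]
    by_contra hc
    push_neg at hc
    obtain ⟨h1, h2⟩ := hc
    -- w q ≤ w r and w r ≤ w p, both strict by injectivity
    have h3 : w q < w r := lt_of_le_of_ne h1 (fun hc2 => absurd (w.injective hc2)
      (ne_of_lt hrq).symm)
    have h4 : w r < w p := lt_of_le_of_ne h2 (fun hc2 => absurd (w.injective hc2)
      (ne_of_gt hpr))
    have h5 : (p, r) ∈ univ.filter (fun x : Fin n × Fin n => x.1 < x.2 ∧ w x.2 < w x.1) := by
      simp only [Finset.mem_filter, Finset.mem_univ, true_and]
      exact ⟨hpr, h4⟩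
    have h6 := hmin _ h5
    have h7 : (r : ℕ) < (q : ℕ) := hrq
    have h8 : (p : ℕ) < (r : ℕ) := hpr
    have h9 : (p : ℕ) < (q : ℕ) := hpq
    simp only at h6
    omega
  have hcov := bruhatCover_mul_swap u hpq huval hmid
  have : u * Equiv.swap p q = w := by
    rw [hudef, mul_assoc]
    simp
  rw [this] at hcov
  exact ⟨u, hcov⟩

lemma one_le (w : Equiv.Perm (Fin n)) : bruhatLE 1 w := by
  generalize hk : invCount w = k
  induction k using Nat.strong_induction_on generalizing w with
  | _ k ih =>
    by_cases hw : w = 1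
    · exact hw ▸ Relation.ReflTransGen.refl
    · obtain ⟨u, hcov⟩ := exists_cover_below hw
      have h1 : invCount w = invCount u + 1 := hcov.2
      exact Relation.ReflTransGen.tail (ih (invCount u) (by omega) u rfl) hcov


end BruhatAux

open BruhatAux in
/-- `z ∈ S_J` if and only if `z ∘ π(J)⁻¹` lies in the Bruhat interval
`[e, π(J)⁻¹]`. -/
theorem stmt_10 (n k : ℕ) (J : Finset (Fin n)) (hk : J.card = k)
    (π : Equiv.Perm (Fin n))
    (hJ : ∀ j ∈ J, (π j : ℕ) = (n - k) + (J.filter (· < j)).card)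
    (hJc : ∀ h : Fin n, h ∉ J → (π h : ℕ) = ((Jᶜ).filter (· < h)).card)
    (z : Equiv.Perm (Fin n)) :
    ((∀ j : Fin n, (j ∈ J → j ≤ z j) ∧ (j ∉ J → z j ≤ j)) ↔
      (bruhatLE 1 (z * π⁻¹) ∧ bruhatLE (z * π⁻¹) π⁻¹)) := by
  classical
  set m := n - k with hmdef
  set σ := π⁻¹ with hσdef
  have hkn : k ≤ n := by
    rw [← hk]
    have := J.card_le_univ
    simpa using this
  have hcc : (Jᶜ).card = m := by
    rw [Finset.card_compl, hk, Fintype.card_fin]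
  have happσ : ∀ p : Fin n, π (σ p) = p := fun p => π.apply_symm_apply p
  have happπ : ∀ j : Fin n, σ (π j) = j := fun j => π.symm_apply_apply j
  -- membership characterization
  have hmemJ : ∀ j : Fin n, j ∈ J ↔ m ≤ (π j : ℕ) := by
    intro j
    constructor
    · intro hj
      rw [hJ j hj]
      omega
    · intro hle
      by_contra hj
      have h1 := hJc j hj
      have h2 : (Jᶜ).filter (· < j) ⊆ (Jᶜ).erase j := by
        intro x hx
        simp only [Finset.mem_filter, Finset.mem_erase] at hx ⊢
        exact ⟨ne_of_lt hx.2, hx.1⟩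
      have h3 := Finset.card_le_card h2
      have h4 : ((Jᶜ).erase j).card = m - 1 := by
        rw [Finset.card_erase_of_mem (Finset.mem_compl.mpr hj), hcc]
      have h5 : 0 < m := by
        have := Finset.card_pos.mpr ⟨j, Finset.mem_compl.mpr hj⟩
        omega
      omega
  -- strict monotonicity of π on Jᶜ and on J
  have hmonoJc : ∀ h h' : Fin n, h ∉ J → h' ∉ J → h < h' → (π h : ℕ) < (π h' : ℕ) := by
    intro h h' hh hh' hlt
    rw [hJc h hh, hJc h' hh']
    apply Finset.card_lt_card
    refine ⟨fun x hx => ?_, fun hsub => ?_⟩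
    · simp only [Finset.mem_filter] at hx ⊢
      exact ⟨hx.1, lt_trans hx.2 hlt⟩
    · have := hsub (Finset.mem_filter.mpr ⟨Finset.mem_compl.mpr hh, hlt⟩)
      simp only [Finset.mem_filter] at this
      exact absurd this.2 (lt_irrefl h)
  have hmonoJ : ∀ h h' : Fin n, h ∈ J → h' ∈ J → h < h' → (π h : ℕ) < (π h' : ℕ) := by
    intro h h' hh hh' hlt
    rw [hJ h hh, hJ h' hh']
    have : (J.filter (· < h)).card < (J.filter (· < h')).card := by
      apply Finset.card_lt_card
      refine ⟨fun x hx => ?_, fun hsub => ?_⟩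
      · simp only [Finset.mem_filter] at hx ⊢
        exact ⟨hx.1, lt_trans hx.2 hlt⟩
      · have := hsub (Finset.mem_filter.mpr ⟨hh, hlt⟩)
        simp only [Finset.mem_filter] at this
        exact absurd this.2 (lt_irrefl h)
    omega
  -- block monotonicity of σ
  have hb1 : ∀ p q : Fin n, p < q → (q : ℕ) < m → σ p < σ q := by
    intro p q hpq hqm
    have hpm : (p : ℕ) < m := by
      have := Fin.lt_def.mp hpq
      omega
    have hσp : σ p ∉ J := by
      intro hmem
      have := (hmemJ (σ p)).mp hmem
      rw [happσ p] at this
      omega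
    have hσq : σ q ∉ J := by
      intro hmem
      have := (hmemJ (σ q)).mp hmem
      rw [happσ q] at this
      omega
    rcases lt_trichotomy (σ p) (σ q) with h | h | h
    · exact h
    · exact absurd (σ.injective h) (ne_of_lt hpq)
    · exfalso
      have := hmonoJc _ _ hσq hσp h
      rw [happσ p, happσ q] at this
      have := Fin.lt_def.mp hpq
      omega
  have hb2 : ∀ p q : Fin n, p < q → m ≤ (p : ℕ) → σ p < σ q := by
    intro p q hpq hpm
    have hqm : m ≤ (q : ℕ) := by
      have := Fin.lt_def.mp hpq
      omega
    have hσp : σ p ∈ J := (hmemJ (σ p)).mpr (by rw [happσ p]; exact hpm)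
    have hσq : σ q ∈ J := (hmemJ (σ q)).mpr (by rw [happσ q]; exact hqm)
    rcases lt_trichotomy (σ p) (σ q) with h | h | h
    · exact h
    · exact absurd (σ.injective h) (ne_of_lt hpq)
    · exfalso
      have := hmonoJ _ _ hσq hσp h
      rw [happσ p, happσ q] at this
      have := Fin.lt_def.mp hpq
      omega
  -- condition equivalence
  have happmul : ∀ p : Fin n, (z * σ) p = z (σ p) := fun p => rfl
  have hcondiff : (∀ j : Fin n, (j ∈ J → j ≤ z j) ∧ (j ∉ J → z j ≤ j)) ↔ Cond (z * σ) σ m := by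
    constructor
    · intro hz p
      constructor
      · intro hpm
        have hnJ : σ p ∉ J := by
          intro hmem
          have := (hmemJ _).mp hmem
          rw [happσ p] at this
          omega
        exact (hz (σ p)).2 hnJ
      · intro hmp
        have hmem : σ p ∈ J := (hmemJ _).mpr (by rw [happσ p]; exact hmp)
        exact (hz (σ p)).1 hmem
    · intro hc j
      constructor
      · intro hj
        have h1 := (hc (π j)).2 ((hmemJ j).mp hj)
        rwa [happmul, happπ j] at h1
      · intro hj
        have hlt : (π j : ℕ) < m := by
          have h2 := (hmemJ j).not.mp hj
          omega
        have h1 := (hc (π j)).1 hlt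
        rwa [happmul, happπ j] at h1
  constructor
  · intro hz
    exact ⟨one_le _, dirB hb1 hb2 (hcondiff.mp hz)⟩
  · rintro ⟨-, hle⟩
    exact hcondiff.mpr (dirA hb1 hb2 hle)
end

section
/- Let J ⊆ [n], let π, π̂ ∈ S_J with π̂ = (i ℓ)∘π for values i < ℓ (i.e., π̂ is obtained from π by swapping the values i and ℓ), and suppose there exists λ ∈ ℝⁿ such that the linear functional x ↦ ∑ₕ λₕ x(h) over S_J is maximized precisely at π and π̂. Then every j with i < j < ℓ is a fixed point of π (and of π̂). -/
theorem Equiv.Perm.apply_inv_self {α : Type*} (f : Equiv.Perm α) (x : α) : f (f⁻¹ x) = x :=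
  Equiv.apply_symm_apply f x

theorem Equiv.Perm.inv_apply_self {α : Type*} (f : Equiv.Perm α) (x : α) : f⁻¹ (f x) = x :=
  Equiv.symm_apply_apply f x

lemma sum_swap_eq {n : ℕ} (lam : Fin n → ℝ) (π : Equiv.Perm (Fin n)) (u v : Fin n)
    (huv : u ≠ v) :
    ∑ h : Fin n, lam h * (((Equiv.swap u v * π) h : ℕ) : ℝ)
      = ∑ h : Fin n, lam h * ((π h : ℕ) : ℝ)
        + (lam (π⁻¹ u) - lam (π⁻¹ v)) * (((v : ℕ) : ℝ) - ((u : ℕ) : ℝ)) := by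
  have hpq : π⁻¹ u ≠ π⁻¹ v := fun h => huv (by simpa using congrArg π h)
  have key : ∑ h : Fin n, (lam h * (((Equiv.swap u v * π) h : ℕ) : ℝ)
      - lam h * ((π h : ℕ) : ℝ))
      = (lam (π⁻¹ u) - lam (π⁻¹ v)) * (((v : ℕ) : ℝ) - ((u : ℕ) : ℝ)) := by
    rw [← Finset.sum_subset (Finset.subset_univ ({π⁻¹ u, π⁻¹ v} : Finset (Fin n)))]
    · rw [Finset.sum_pair hpq]
      have h1 : (Equiv.swap u v * π) (π⁻¹ u) = v := by
        simp [Equiv.Perm.mul_apply]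
      have h2 : (Equiv.swap u v * π) (π⁻¹ v) = u := by
        simp [Equiv.Perm.mul_apply]
      rw [h1, h2]
      simp only [Equiv.Perm.apply_inv_self]
      ring
    · intro h _ hh
      simp only [Finset.mem_insert, Finset.mem_singleton] at hh
      push_neg at hh
      have hu : π h ≠ u := fun e => hh.1 (by rw [← e, Equiv.Perm.inv_apply_self])
      have hv : π h ≠ v := fun e => hh.2 (by rw [← e, Equiv.Perm.inv_apply_self])
      rw [Equiv.Perm.mul_apply, Equiv.swap_apply_of_ne_of_ne hu hv]
      ring
  rw [Finset.sum_sub_distrib] at key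
  linarith

/-- If `π, π̂ ∈ S_J` differ by swapping the values `i < ℓ`, and some linear
functional `λ` is maximized over `S_J` precisely at `π` and `π̂`, then every
value `j` with `i < j < ℓ` is a fixed point of `π` and of `π̂`. -/
theorem stmt_11 (n : ℕ) (J : Finset (Fin n)) (SJ : Set (Equiv.Perm (Fin n)))
    (hSJ : SJ = {z : Equiv.Perm (Fin n) | ∀ j : Fin n, (j ∈ J → j ≤ z j) ∧ (j ∉ J → z j ≤ j)})
    (lam : Fin n → ℝ) (π πh : Equiv.Perm (Fin n)) (i l : Fin n) (hil : i < l)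
    (hπ : π ∈ SJ) (hπh : πh ∈ SJ) (hswap : πh = Equiv.swap i l * π)
    (hmax : ∀ x ∈ SJ, ∑ h : Fin n, lam h * ((x h : ℕ) : ℝ)
      ≤ ∑ h : Fin n, lam h * ((π h : ℕ) : ℝ))
    (hval : ∑ h : Fin n, lam h * ((πh h : ℕ) : ℝ) = ∑ h : Fin n, lam h * ((π h : ℕ) : ℝ))
    (hprec : ∀ x ∈ SJ, ∑ h : Fin n, lam h * ((x h : ℕ) : ℝ)
      = ∑ h : Fin n, lam h * ((π h : ℕ) : ℝ) → x = π ∨ x = πh) :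
    ∀ j : Fin n, i < j → j < l → π j = j ∧ πh j = j := by
  subst hSJ hswap
  simp only [Set.mem_setOf_eq] at hπ hπh
  have hilne : i ≠ l := ne_of_lt hil
  have hilR : ((i : ℕ) : ℝ) < ((l : ℕ) : ℝ) := by exact_mod_cast hil
  set a := π⁻¹ i with ha
  set b := π⁻¹ l with hb
  have hπa : π a = i := Equiv.Perm.apply_inv_self π i
  have hπb : π b = l := Equiv.Perm.apply_inv_self π l
  have hπha : (Equiv.swap i l * π) a = l := by
    rw [Equiv.Perm.mul_apply, hπa, Equiv.swap_apply_left]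
  have hπhb : (Equiv.swap i l * π) b = i := by
    rw [Equiv.Perm.mul_apply, hπb, Equiv.swap_apply_right]
  -- lam a = lam b
  have hab : lam a = lam b := by
    have hs := sum_swap_eq lam π i l hilne
    rw [← ha, ← hb] at hs
    rw [hs] at hval
    have h0 : (lam a - lam b) * (((l : ℕ) : ℝ) - ((i : ℕ) : ℝ)) = 0 := by linarith
    rcases mul_eq_zero.mp h0 with h | h
    · linarith
    · linarith
  -- Lemma A : positions whose value is in (i,l) and constraints force "swap with l" feasible
  have lemA : ∀ c : Fin n, i < π c → π c < l → (c < π c ∨ l ≤ c) → lam c < lam a := by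
    intro c h1 h2 h3
    have hjl : π c ≠ l := ne_of_lt h2
    set x := Equiv.swap (π c) l * π with hx
    have hxc : x c = l := by rw [hx, Equiv.Perm.mul_apply, Equiv.swap_apply_left]
    have hxb : x b = π c := by rw [hx, Equiv.Perm.mul_apply, hπb, Equiv.swap_apply_right]
    have hxmem : x ∈ {z : Equiv.Perm (Fin n) |
        ∀ j : Fin n, (j ∈ J → j ≤ z j) ∧ (j ∉ J → z j ≤ j)} := by
      intro p
      by_cases hpc : p = c
      · subst hpc
        refine ⟨fun hq => ?_, fun hq => ?_⟩
        · rw [hxc]; exact le_trans ((hπ p).1 hq) (le_of_lt h2)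
        · rw [hxc]
          rcases h3 with h3 | h3
          · exact absurd ((hπ p).2 hq) (not_le.mpr h3)
          · exact h3
      · by_cases hpb : p = b
        · subst hpb
          refine ⟨fun hpJ => ?_, fun hpJ => ?_⟩
          · rw [hxb]
            have hble : b ≤ i := by have := (hπh b).1 hpJ; rwa [hπhb] at this
            exact le_of_lt (lt_of_le_of_lt hble h1)
          · rw [hxb]
            have hble : l ≤ b := by have := (hπ b).2 hpJ; rwa [hπb] at this
            exact le_of_lt (lt_of_lt_of_le h2 hble)
        · have hu : π p ≠ π c := fun e => hpc (π.injective e)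
          have hv : π p ≠ l := fun e => hpb (by rw [hb, ← e, Equiv.Perm.inv_apply_self])
          have hxp : x p = π p := by
            rw [hx, Equiv.Perm.mul_apply, Equiv.swap_apply_of_ne_of_ne hu hv]
          rw [hxp]; exact hπ p
    have hs := sum_swap_eq lam π (π c) l hjl
    rw [Equiv.Perm.inv_apply_self, ← hb] at hs
    have hjlR : ((π c : ℕ) : ℝ) < ((l : ℕ) : ℝ) := by exact_mod_cast h2
    have hle := hmax x hxmem
    rw [hs] at hle
    have hprod : (lam c - lam b) * (((l : ℕ) : ℝ) - ((π c : ℕ) : ℝ)) ≤ 0 := by linarith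
    have hcb' : lam c ≤ lam b := by
      by_contra hcon
      push_neg at hcon
      have : 0 < (lam c - lam b) * (((l : ℕ) : ℝ) - ((π c : ℕ) : ℝ)) :=
        mul_pos (by linarith) (by linarith)
      linarith
    rcases lt_or_eq_of_le hcb' with hlt | heq
    · rw [hab]; exact hlt
    · exfalso
      have heqsum : ∑ h : Fin n, lam h * ((x h : ℕ) : ℝ)
          = ∑ h : Fin n, lam h * ((π h : ℕ) : ℝ) := by rw [hs, heq]; ring
      rcases hprec x hxmem heqsum with he | he
      · have hxe : x c = π c := by rw [he]
        rw [hxc] at hxe; exact hjl hxe.symm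
      · have hxe : x c = (Equiv.swap i l * π) c := by rw [he]
        rw [hxc, Equiv.Perm.mul_apply,
          Equiv.swap_apply_of_ne_of_ne (ne_of_gt h1) hjl] at hxe
        exact hjl hxe.symm
  -- Lemma B
  have lemB : ∀ c : Fin n, i < π c → π c < l → (π c < c ∨ c ≤ i) → lam a < lam c := by
    intro c h1 h2 h3
    have hij : i ≠ π c := ne_of_lt h1
    set x := Equiv.swap i (π c) * π with hx
    have hxa : x a = π c := by rw [hx, Equiv.Perm.mul_apply, hπa, Equiv.swap_apply_left]
    have hxc : x c = i := by rw [hx, Equiv.Perm.mul_apply, Equiv.swap_apply_right]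
    have hxmem : x ∈ {z : Equiv.Perm (Fin n) |
        ∀ j : Fin n, (j ∈ J → j ≤ z j) ∧ (j ∉ J → z j ≤ j)} := by
      intro p
      by_cases hpc : p = c
      · subst hpc
        refine ⟨fun hq => ?_, fun hq => ?_⟩
        · rw [hxc]
          rcases h3 with h3 | h3
          · exact absurd ((hπ p).1 hq) (not_le.mpr h3)
          · exact h3
        · rw [hxc]; exact le_of_lt (lt_of_lt_of_le h1 ((hπ p).2 hq))
      · by_cases hpa : p = a
        · subst hpa
          refine ⟨fun hpJ => ?_, fun hpJ => ?_⟩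
          · rw [hxa]
            have hale : a ≤ i := by have := (hπ a).1 hpJ; rwa [hπa] at this
            exact le_of_lt (lt_of_le_of_lt hale h1)
          · rw [hxa]
            have hale : l ≤ a := by have := (hπh a).2 hpJ; rwa [hπha] at this
            exact le_of_lt (lt_of_lt_of_le h2 hale)
        · have hu : π p ≠ i := fun e => hpa (by rw [ha, ← e, Equiv.Perm.inv_apply_self])
          have hv : π p ≠ π c := fun e => hpc (π.injective e)
          have hxp : x p = π p := by
            rw [hx, Equiv.Perm.mul_apply, Equiv.swap_apply_of_ne_of_ne hu hv]
          rw [hxp]; exact hπ p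
    have hs := sum_swap_eq lam π i (π c) hij
    rw [Equiv.Perm.inv_apply_self, ← ha] at hs
    have hijR : ((i : ℕ) : ℝ) < ((π c : ℕ) : ℝ) := by exact_mod_cast h1
    have hle := hmax x hxmem
    rw [hs] at hle
    have hprod : (lam a - lam c) * (((π c : ℕ) : ℝ) - ((i : ℕ) : ℝ)) ≤ 0 := by linarith
    have hac' : lam a ≤ lam c := by
      by_contra hcon
      push_neg at hcon
      have : 0 < (lam a - lam c) * (((π c : ℕ) : ℝ) - ((i : ℕ) : ℝ)) :=
        mul_pos (by linarith) (by linarith)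
      linarith
    rcases lt_or_eq_of_le hac' with hlt | heq
    · exact hlt
    · exfalso
      have heqsum : ∑ h : Fin n, lam h * ((x h : ℕ) : ℝ)
          = ∑ h : Fin n, lam h * ((π h : ℕ) : ℝ) := by rw [hs, ← heq]; ring
      rcases hprec x hxmem heqsum with he | he
      · have hxe : x c = π c := by rw [he]
        rw [hxc] at hxe; exact hij hxe
      · have hxe : x c = (Equiv.swap i l * π) c := by rw [he]
        rw [hxc, Equiv.Perm.mul_apply,
          Equiv.swap_apply_of_ne_of_ne (ne_of_gt h1) (ne_of_lt h2)] at hxe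
        exact hij hxe
  -- main part
  intro j hij hjl
  have hji : j ≠ i := ne_of_gt hij
  have hjlne : j ≠ l := ne_of_lt hjl
  have hπj : π j = j := by
    by_contra hne
    classical
    set D : Finset (Fin n) :=
      Finset.univ.filter (fun p => i < p ∧ p < l ∧ π p ≠ p) with hD
    have hmemD : ∀ p : Fin n, p ∈ D ↔ (i < p ∧ p < l ∧ π p ≠ p) := by
      intro p; simp [hD]
    have hjD : j ∈ D := (hmemD j).mpr ⟨hij, hjl, hne⟩
    have hD1 : ∀ p ∈ D, π⁻¹ p ∈ D := by
      intro p hp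
      rw [hmemD] at hp
      obtain ⟨hp1, hp2, hp3⟩ := hp
      have hπc : π (π⁻¹ p) = p := Equiv.Perm.apply_inv_self π p
      have h1 : i < π (π⁻¹ p) := by rw [hπc]; exact hp1
      have h2 : π (π⁻¹ p) < l := by rw [hπc]; exact hp2
      rw [hmemD]
      have hci : i < π⁻¹ p := by
        by_contra hci
        push_neg at hci
        have hA := lemA _ h1 h2 (Or.inl (by rw [hπc]; exact lt_of_le_of_lt hci hp1))
        have hB := lemB _ h1 h2 (Or.inr hci)
        linarith
      have hcl : π⁻¹ p < l := by
        by_contra hcl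
        push_neg at hcl
        have hA := lemA _ h1 h2 (Or.inr hcl)
        have hB := lemB _ h1 h2 (Or.inl (by rw [hπc]; exact lt_of_lt_of_le hp2 hcl))
        linarith
      refine ⟨hci, hcl, ?_⟩
      rw [hπc]
      intro e
      apply hp3
      have he2 : π p = π (π⁻¹ p) := congrArg π e
      rw [hπc] at he2
      exact he2
    have hnotD : ∀ p, p ∉ D → π p ∉ D := by
      intro p hp hc
      apply hp
      have := hD1 _ hc
      rwa [Equiv.Perm.inv_apply_self] at this
    have hD2 : ∀ p ∈ D, π p ∈ D := by
      have himg : D.image (fun p => π⁻¹ p) = D :=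
        Finset.eq_of_subset_of_card_le
          (by
            intro q hq
            obtain ⟨r, hr, he⟩ := Finset.mem_image.mp hq
            exact he ▸ hD1 r hr)
          (le_of_eq (Finset.card_image_of_injective D (Equiv.injective π⁻¹)).symm)
      intro p hp
      rw [← himg] at hp
      obtain ⟨q, hq, he⟩ := Finset.mem_image.mp hp
      have heq : q = π p := by rw [← he, Equiv.Perm.apply_inv_self]
      rwa [← heq]
    -- build the permutation fixing D and equal to π elsewhere
    set f : Fin n → Fin n := fun p => if p ∈ D then p else π p with hf
    have hfinj : Function.Injective f := by
      intro p q hpq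
      simp only [hf] at hpq
      by_cases hp : p ∈ D
      · by_cases hq : q ∈ D
        · rwa [if_pos hp, if_pos hq] at hpq
        · rw [if_pos hp, if_neg hq] at hpq
          exact absurd (hpq ▸ hp) (hnotD q hq)
      · by_cases hq : q ∈ D
        · rw [if_neg hp, if_pos hq] at hpq
          exact absurd (hpq.symm ▸ hq) (hnotD p hp)
        · rw [if_neg hp, if_neg hq] at hpq
          exact π.injective hpq
    set y : Equiv.Perm (Fin n) :=
      Equiv.ofBijective f (Finite.injective_iff_bijective.mp hfinj) with hy
    have hyD : ∀ p, p ∈ D → y p = p := by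
      intro p hp
      show f p = p
      rw [hf]
      exact if_pos hp
    have hyN : ∀ p, p ∉ D → y p = π p := by
      intro p hp
      show f p = π p
      rw [hf]
      exact if_neg hp
    have hymem : y ∈ {z : Equiv.Perm (Fin n) |
        ∀ j : Fin n, (j ∈ J → j ≤ z j) ∧ (j ∉ J → z j ≤ j)} := by
      intro p
      by_cases hp : p ∈ D
      · rw [hyD p hp]
        exact ⟨fun _ => le_refl p, fun _ => le_refl p⟩
      · rw [hyN p hp]
        exact hπ p
    have hle := hmax y hymem
    -- the sum over D of lam h * (π h - h) is ≥ 0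
    have e0 : ∑ h ∈ D, (lam h * ((π h : ℕ) : ℝ) - lam h * ((y h : ℕ) : ℝ))
        = ∑ h : Fin n, (lam h * ((π h : ℕ) : ℝ) - lam h * ((y h : ℕ) : ℝ)) := by
      apply Finset.sum_subset (Finset.subset_univ D)
      intro p _ hp
      rw [hyN p hp]
      ring
    have e1 : ∑ h ∈ D, (lam h * ((π h : ℕ) : ℝ) - lam h * ((y h : ℕ) : ℝ))
        = ∑ h ∈ D, lam h * (((π h : ℕ) : ℝ) - ((h : ℕ) : ℝ)) := by
      apply Finset.sum_congr rfl
      intro p hp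
      rw [hyD p hp]
      ring
    have hge : 0 ≤ ∑ h ∈ D, lam h * (((π h : ℕ) : ℝ) - ((h : ℕ) : ℝ)) := by
      rw [← e1, e0, Finset.sum_sub_distrib]
      linarith
    -- π permutes D, so ∑ over D of (π h - h) = 0
    have himg2 : D.image (fun p => π p) = D :=
      Finset.eq_of_subset_of_card_le
        (by
          intro q hq
          obtain ⟨r, hr, he⟩ := Finset.mem_image.mp hq
          exact he ▸ hD2 r hr)
        (le_of_eq (Finset.card_image_of_injective D π.injective).symm)
    have h2sum : ∑ h ∈ D, ((π h : ℕ) : ℝ) = ∑ h ∈ D, ((h : ℕ) : ℝ) := by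
      have hsi : ∑ x ∈ D.image (fun p : Fin n => π p), ((x : ℕ) : ℝ)
          = ∑ x ∈ D, ((π x : ℕ) : ℝ) :=
        Finset.sum_image (fun x _ y _ hxy => π.injective hxy)
      rw [himg2] at hsi
      exact hsi.symm
    have hzero : ∑ h ∈ D, (((π h : ℕ) : ℝ) - ((h : ℕ) : ℝ)) = 0 := by
      rw [Finset.sum_sub_distrib, h2sum]
      ring
    have hsum0 : 0 ≤ ∑ h ∈ D, (lam h - lam a) * (((π h : ℕ) : ℝ) - ((h : ℕ) : ℝ)) := by
      have expand : ∀ h ∈ D, (lam h - lam a) * (((π h : ℕ) : ℝ) - ((h : ℕ) : ℝ))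
          = lam h * (((π h : ℕ) : ℝ) - ((h : ℕ) : ℝ))
            - lam a * (((π h : ℕ) : ℝ) - ((h : ℕ) : ℝ)) := fun h _ => by ring
      rw [Finset.sum_congr rfl expand, Finset.sum_sub_distrib, ← Finset.mul_sum, hzero,
        mul_zero, sub_zero]
      exact hge
    have hneg : ∑ h ∈ D, (lam h - lam a) * (((π h : ℕ) : ℝ) - ((h : ℕ) : ℝ)) < 0 := by
      have hlt : ∑ h ∈ D, (lam h - lam a) * (((π h : ℕ) : ℝ) - ((h : ℕ) : ℝ))
          < ∑ _h ∈ D, (0 : ℝ) := by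
        apply Finset.sum_lt_sum_of_nonempty ⟨j, hjD⟩
        intro p hp
        have hpD := hp
        rw [hmemD] at hpD
        obtain ⟨hp1, hp2, hp3⟩ := hpD
        have hπpD := hD2 p hp
        rw [hmemD] at hπpD
        obtain ⟨hq1, hq2, _⟩ := hπpD
        rcases lt_or_gt_of_ne hp3 with hlt' | hgt'
        · have hBB := lemB p hq1 hq2 (Or.inl hlt')
          have hX : ((π p : ℕ) : ℝ) < ((p : ℕ) : ℝ) := by exact_mod_cast hlt'
          have : 0 < (lam p - lam a) * (((p : ℕ) : ℝ) - ((π p : ℕ) : ℝ)) :=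
            mul_pos (by linarith) (by linarith)
          nlinarith
        · have hAA := lemA p hq1 hq2 (Or.inl hgt')
          have hX : ((p : ℕ) : ℝ) < ((π p : ℕ) : ℝ) := by exact_mod_cast hgt'
          have : 0 < (lam a - lam p) * (((π p : ℕ) : ℝ) - ((p : ℕ) : ℝ)) :=
            mul_pos (by linarith) (by linarith)
          nlinarith
      rw [Finset.sum_const_zero] at hlt
      exact hlt
    linarith
  refine ⟨hπj, ?_⟩
  rw [Equiv.Perm.mul_apply, hπj, Equiv.swap_apply_of_ne_of_ne hji hjlne]
end

section
/- Let λ ∈ ℝⁿ have coordinates forming a permutation of the values 1, n², n⁴, …, n^{2(n-1)}, and let h be the index with λ_h = n^{2(n-1)}. Suppose x, y ∈ Sₙ (viewed as points in ℝⁿ) satisfy x(h) ≥ y(h) + 1. Then λ·x > λ·y. -/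
/-- If the coordinates of `λ` are a permutation of `1, n², n⁴, …, n^{2(n-1)}`,
`λ_h = n^{2(n-1)}` is the largest one, and `x, y ∈ Sₙ` satisfy
`x(h) ≥ y(h) + 1`, then `λ·x > λ·y`. -/
theorem stmt_12 (n : ℕ) (lam : Fin n → ℝ) (σ : Equiv.Perm (Fin n))
    (hlam : ∀ j : Fin n, lam j = (n : ℝ) ^ (2 * (σ j : ℕ)))
    (h : Fin n) (hh : lam h = (n : ℝ) ^ (2 * (n - 1)))
    (x y : Equiv.Perm (Fin n)) (hxy : (y h : ℕ) + 1 ≤ (x h : ℕ)) :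
    ∑ j : Fin n, lam j * ((y j : ℕ) : ℝ) < ∑ j : Fin n, lam j * ((x j : ℕ) : ℝ) := by
  rcases Nat.lt_or_ge n 2 with hn | hn
  · interval_cases n
    · exact h.elim0
    · have h1 := (x h).isLt; have h2 := (y h).isLt; omega
  -- now n ≥ 2
  have hn0 : (0:ℝ) < n := by positivity
  have hn1 : (1:ℝ) < n := by exact_mod_cast hn
  have hinj : ∀ a b : ℕ, (n:ℝ) ^ a = (n:ℝ) ^ b → a = b := by
    intro a b hab
    rcases lt_trichotomy a b with hlt | heq | hgt
    · exact absurd hab (ne_of_lt (pow_lt_pow_right₀ hn1 hlt))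
    · exact heq
    · exact absurd hab.symm (ne_of_lt (pow_lt_pow_right₀ hn1 hgt))
  have hσh : (σ h : ℕ) = n - 1 := by
    have h1 := (hlam h).symm.trans hh
    have := hinj _ _ h1
    omega
  -- for j ≠ h, σ j ≤ n - 2
  have hσj : ∀ j : Fin n, j ≠ h → (σ j : ℕ) ≤ n - 2 := by
    intro j hj
    have hne : (σ j : ℕ) ≠ (σ h : ℕ) := by
      intro hc
      exact hj (σ.injective (Fin.ext hc))
    have := (σ j).isLt
    omega
  have hlamle : ∀ j : Fin n, j ≠ h → lam j ≤ (n:ℝ) ^ (2 * (n - 2)) := by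
    intro j hj
    rw [hlam j]
    exact pow_le_pow_right₀ hn1.le (by have := hσj j hj; omega)
  have hlampos : ∀ j : Fin n, 0 < lam j := by
    intro j; rw [hlam j]; positivity
  rw [← sub_pos, ← Finset.sum_sub_distrib]
  rw [← Finset.add_sum_erase Finset.univ _ (Finset.mem_univ h)]
  set B : ℝ := (n:ℝ) ^ (2 * (n - 2)) * (n - 1) with hB
  have hterm : ∀ j ∈ Finset.univ.erase h,
      -B ≤ lam j * ((x j : ℕ) : ℝ) - lam j * ((y j : ℕ) : ℝ) := by
    intro j hj
    have hjne : j ≠ h := (Finset.mem_erase.mp hj).1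
    have hx : ((x j : ℕ) : ℝ) ≤ (n:ℝ) - 1 := by
      have := (x j).isLt
      have : ((x j : ℕ) : ℝ) ≤ ((n - 1 : ℕ) : ℝ) := by exact_mod_cast Nat.le_sub_one_of_lt this
      rw [Nat.cast_sub (by omega)] at this; simpa using this
    have hy : (0:ℝ) ≤ ((y j : ℕ) : ℝ) := Nat.cast_nonneg _
    have hl := hlamle j hjne
    have hlp := (hlampos j).le
    have h1 : lam j * ((x j : ℕ) : ℝ) - lam j * ((y j : ℕ) : ℝ)
        ≥ lam j * (0 - ((n:ℝ) - 1)) := by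
      have hy' : ((y j : ℕ) : ℝ) ≤ (n:ℝ) - 1 := by
        have := (y j).isLt
        have : ((y j : ℕ) : ℝ) ≤ ((n - 1 : ℕ) : ℝ) := by exact_mod_cast Nat.le_sub_one_of_lt this
        rw [Nat.cast_sub (by omega)] at this; simpa using this
      have hx' : (0:ℝ) ≤ ((x j : ℕ) : ℝ) := Nat.cast_nonneg _
      nlinarith
    have h2 : lam j * (0 - ((n:ℝ) - 1)) ≥ -B := by
      rw [hB]
      have hn1' : (0:ℝ) ≤ (n:ℝ) - 1 := by linarith
      nlinarith
    linarith
  have hsum : ((Finset.univ.erase h).card : ℝ) • (-B)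
      ≤ ∑ j ∈ Finset.univ.erase h,
        (lam j * ((x j : ℕ) : ℝ) - lam j * ((y j : ℕ) : ℝ)) := by
    have := Finset.card_nsmul_le_sum (Finset.univ.erase h)
      (fun j => lam j * ((x j : ℕ) : ℝ) - lam j * ((y j : ℕ) : ℝ)) (-B) hterm
    simpa [nsmul_eq_mul] using this
  have hcard : ((Finset.univ.erase h).card : ℝ) = (n:ℝ) - 1 := by
    rw [Finset.card_erase_of_mem (Finset.mem_univ h)]
    simp [Nat.cast_sub (by omega : 1 ≤ n)]
  rw [hcard, smul_eq_mul] at hsum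
  -- main term
  have hmain : (n:ℝ) ^ (2 * (n - 1)) ≤ lam h * ((x h : ℕ) : ℝ) - lam h * ((y h : ℕ) : ℝ) := by
    rw [hh, ← mul_sub]
    have h1 : (1:ℝ) ≤ ((x h : ℕ) : ℝ) - ((y h : ℕ) : ℝ) := by
      have : ((y h : ℕ) : ℝ) + 1 ≤ ((x h : ℕ) : ℝ) := by exact_mod_cast hxy
      linarith
    nlinarith [pow_pos hn0 (2 * (n - 1))]
  -- final arithmetic
  have hA : (n:ℝ) ^ (2 * (n - 1)) = (n:ℝ) ^ (2 * (n - 2)) * (n:ℝ) ^ 2 := by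
    rw [← pow_add]; congr 1; omega
  have hfin : (0:ℝ) < (n:ℝ) ^ (2 * (n - 1)) + ((n:ℝ) - 1) * (-B) := by
    rw [hA, hB]
    have hp : (0:ℝ) < (n:ℝ) ^ (2 * (n - 2)) := pow_pos hn0 _
    nlinarith
  linarith
end
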